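/- arXiv:1811.05109 — 2 statements merged into one kernel-verified Lean document; each statement's English description precedes it below -/
import Mathlib

section
/- Let m, n be integers with n ≥ 1 and gcd(m, n) = 1. Define an action of the group AddCircle(1) on AddCircle(1) × ℂ by ψ · (θ, z) = (θ + n•ψ, toCircle((m+n)•ψ) · z), where toCircle : AddCircle(1) → Circle is the canonical character ψ ↦ e^{2πiψ} and Circle acts on ℂ by multiplication. Then: (1) this is a well-defined continuous action of AddCircle(1); (2) for every point (θ, z) with z ≠ 0, the stabilizer is trivial (the action is free off the core {z = 0}); (3) for every point (θ, 0), the stabilizer equals {ψ ∈ AddCircle(1) : n•ψ = 0}, a cyclic subgroup of order n. -/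
open AddCircle

/-- The circle action on the solid-torus piece after the Gluck twist:
`ψ · (θ, z) = (θ + n•ψ, e^{2πi(m+n)ψ} · z)`. -/
noncomputable def twistAct (m n : ℤ) (ψ : AddCircle (1 : ℝ))
    (p : AddCircle (1 : ℝ) × ℂ) : AddCircle (1 : ℝ) × ℂ :=
  (p.1 + n • ψ, (AddCircle.toCircle ((m + n) • ψ) : ℂ) * p.2)

/-- for coprime `(m, n)` with `n ≥ 1`, the map `twistAct` is a
well-defined continuous action of `ℝ/ℤ`; it is free off the core `{z = 0}`,
and the stabilizer of a core point is the `n`-torsion subgroup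
`{ψ : n•ψ = 0}`, which is cyclic of order `n`. -/
theorem twistAct_orbit_structure (m n : ℤ) (hn : 1 ≤ n) (h : Int.gcd m n = 1) :
    (∀ p : AddCircle (1 : ℝ) × ℂ, twistAct m n 0 p = p) ∧
    (∀ (ψ ψ' : AddCircle (1 : ℝ)) (p : AddCircle (1 : ℝ) × ℂ),
      twistAct m n (ψ + ψ') p = twistAct m n ψ (twistAct m n ψ' p)) ∧
    Continuous (fun q : AddCircle (1 : ℝ) × (AddCircle (1 : ℝ) × ℂ) =>
      twistAct m n q.1 q.2) ∧
    (∀ (θ : AddCircle (1 : ℝ)) (z : ℂ), z ≠ 0 →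
      ∀ ψ : AddCircle (1 : ℝ), twistAct m n ψ (θ, z) = (θ, z) → ψ = 0) ∧
    (∀ (θ : AddCircle (1 : ℝ)) (ψ : AddCircle (1 : ℝ)),
      twistAct m n ψ (θ, 0) = (θ, 0) ↔ n • ψ = 0) ∧
    Nat.card {ψ : AddCircle (1 : ℝ) // n • ψ = 0} = n.toNat := by
  refine ⟨?_, ?_, ?_, ?_, ?_, ?_⟩
  · -- identity acts trivially
    intro p; simp [twistAct]
  · -- compatibility of the action
    intro ψ ψ' p
    simp only [twistAct, smul_add, toCircle_add, Prod.mk.injEq, Submonoid.coe_mul]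
    constructor
    · abel
    · push_cast; ring
  · -- continuity
    unfold twistAct
    refine Continuous.prodMk ?_ ?_
    · exact (continuous_fst.comp continuous_snd).add ((continuous_zsmul n).comp continuous_fst)
    · exact ((continuous_induced_dom.comp (continuous_toCircle.comp
        ((continuous_zsmul (m+n)).comp continuous_fst)))).mul (continuous_snd.comp continuous_snd)
  · -- freeness off the core
    intro θ z hz ψ hψ
    rw [twistAct, Prod.mk.injEq] at hψ
    obtain ⟨h1, h2⟩ := hψ
    have hn0 : n • ψ = 0 := by
      have := h1
      rwa [add_eq_left] at this
    have hmn0 : (m + n) • ψ = 0 := by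
      have hc1 : (toCircle ((m + n) • ψ) : ℂ) = 1 := by
        rcases mul_left_eq_self₀.mp h2 with hh | hh
        · exact hh
        · exact absurd hh hz
      have hc : toCircle ((m + n) • ψ) = 1 := OneMemClass.coe_eq_one.mp hc1
      exact injective_toCircle (T := (1:ℝ)) one_ne_zero (hc.trans toCircle_zero.symm)
    have hm0 : m • ψ = 0 := by
      have : (m + n) • ψ = m • ψ + n • ψ := add_zsmul ψ m n
      rw [this, hn0, add_zero] at hmn0
      exact hmn0
    obtain ⟨a, b, hab⟩ : ∃ a b : ℤ, a * m + b * n = 1 := by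
      obtain ⟨a, b, hab⟩ := Int.isCoprime_iff_gcd_eq_one.mpr h
      exact ⟨a, b, hab⟩
    calc ψ = (1 : ℤ) • ψ := (one_zsmul ψ).symm
      _ = (a * m + b * n) • ψ := by rw [hab]
      _ = a • (m • ψ) + b • (n • ψ) := by rw [add_zsmul, mul_zsmul, mul_zsmul]
      _ = 0 := by rw [hm0, hn0, smul_zero, smul_zero, add_zero]
  · -- stabilizer of a core point
    intro θ ψ
    rw [twistAct, Prod.mk.injEq]
    simp [add_eq_left]
  · -- the n-torsion subgroup has n elements
    have hn0 : (n : ℝ) ≠ 0 := by exact_mod_cast (by omega : n ≠ 0)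
    set f : Fin n.toNat → {ψ : AddCircle (1 : ℝ) // n • ψ = 0} :=
      fun k => ⟨(((k : ℕ) : ℝ) / (n : ℝ) : ℝ), by
        rw [← coe_zsmul, coe_eq_zero_iff]
        exact ⟨(k : ℕ), by rw [zsmul_eq_mul, zsmul_eq_mul]; push_cast; field_simp⟩⟩ with hf
    have hbij : Function.Bijective f := by
      constructor
      · rintro ⟨k₁, hk₁⟩ ⟨k₂, hk₂⟩ hkk
        simp only [hf, Subtype.mk.injEq] at hkk
        rw [coe_eq_coe_iff_of_mem_Ico (a := 0)] at hkk
        · field_simp at hkk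
          ext
          exact_mod_cast hkk
        · constructor
          · positivity
          · rw [zero_add, div_lt_one (by exact_mod_cast (by omega : (0:ℤ) < n))]
            have : ((n.toNat : ℕ) : ℝ) = (n:ℝ) := by exact_mod_cast Int.toNat_of_nonneg (by omega)
            rw [← this]; exact_mod_cast hk₁
        · constructor
          · positivity
          · rw [zero_add, div_lt_one (by exact_mod_cast (by omega : (0:ℤ) < n))]
            have : ((n.toNat : ℕ) : ℝ) = (n:ℝ) := by exact_mod_cast Int.toNat_of_nonneg (by omega)
            rw [← this]; exact_mod_cast hk₂
      · rintro ⟨ψ, hψ⟩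
        induction ψ using QuotientAddGroup.induction_on with
        | H x =>
          rw [← coe_zsmul, coe_eq_zero_iff] at hψ
          obtain ⟨j, hj⟩ := hψ
          have hx : x = (j : ℝ) / n := by
            field_simp
            rw [mul_comm]
            simpa [zsmul_eq_mul] using hj.symm
          refine ⟨⟨(j % n).toNat, ?_⟩, ?_⟩
          · have := Int.emod_lt_of_pos j (by omega : (0:ℤ) < n)
            omega
          · ext
            simp only [hf]
            have hmod : ((j % n).toNat : ℝ) = (j : ℝ) - (j / n : ℤ) * n := by
              have : ((j % n : ℤ) : ℝ) = (j : ℝ) - (j / n : ℤ) * n := by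
                rw [Int.emod_def]; push_cast; ring
              rw [← this]
              norm_cast
              exact Int.toNat_of_nonneg (Int.emod_nonneg j (by omega))
            rw [hx, hmod, ← sub_eq_zero, ← coe_sub, coe_eq_zero_iff]
            exact ⟨-(j / n), by rw [zsmul_eq_mul, mul_one, sub_div, mul_div_assoc, div_self hn0]; push_cast; ring⟩
    rw [← Nat.card_eq_of_bijective f hbij, Nat.card_eq_fintype_card, Fintype.card_fin]
end

section
/- Let S² denote the unit sphere in ℝ³ and Real.Angle = ℝ/2πℤ the circle, and let σ, σ⁻¹ : S² × Real.Angle → S² × Real.Angle be the homeomorphisms σ((x₁, x₂, x₃), φ) = ((x₁·cos φ + x₂·sin φ, −x₁·sin φ + x₂·cos φ, x₃), φ) and σ⁻¹((x₁, x₂, x₃), φ) = ((x₁·cos φ − x₂·sin φ, x₁·sin φ + x₂·cos φ, x₃), φ). Then σ is isotopic to σ⁻¹: there exists a continuous map H : Set.Icc (0:ℝ) 1 × (S² × Real.Angle) → S² × Real.Angle such that H(0, ·) = σ, H(1, ·) = σ⁻¹, and for every t ∈ [0,1] the map H(t, ·) is a homeomorphism of S² × Real.Angle. -/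
noncomputable def rotX3 (θ : ℝ) (x : EuclideanSpace ℝ (Fin 3)) : EuclideanSpace ℝ (Fin 3) :=
  (WithLp.equiv 2 (Fin 3 → ℝ)).symm
    ![x 0, Real.cos θ * x 1 - Real.sin θ * x 2, Real.sin θ * x 1 + Real.cos θ * x 2]

lemma rotX3_apply0 (θ : ℝ) (x : EuclideanSpace ℝ (Fin 3)) : rotX3 θ x 0 = x 0 := rfl
lemma rotX3_apply1 (θ : ℝ) (x : EuclideanSpace ℝ (Fin 3)) :
    rotX3 θ x 1 = Real.cos θ * x 1 - Real.sin θ * x 2 := rfl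
lemma rotX3_apply2 (θ : ℝ) (x : EuclideanSpace ℝ (Fin 3)) :
    rotX3 θ x 2 = Real.sin θ * x 1 + Real.cos θ * x 2 := rfl

lemma euclid3_ext {x y : EuclideanSpace ℝ (Fin 3)}
    (h0 : x 0 = y 0) (h1 : x 1 = y 1) (h2 : x 2 = y 2) : x = y := by
  ext i
  fin_cases i <;> assumption

lemma rotX3_norm (θ : ℝ) (x : EuclideanSpace ℝ (Fin 3)) : ‖rotX3 θ x‖ = ‖x‖ := by
  rw [EuclideanSpace.norm_eq, EuclideanSpace.norm_eq]
  congr 1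
  rw [Fin.sum_univ_three, Fin.sum_univ_three, rotX3_apply0, rotX3_apply1, rotX3_apply2]
  simp only [Real.norm_eq_abs, sq_abs]
  nlinarith [Real.sin_sq_add_cos_sq θ]

lemma rotX3_rotX3 (θ : ℝ) (x : EuclideanSpace ℝ (Fin 3)) :
    rotX3 (-θ) (rotX3 θ x) = x := by
  have h := Real.sin_sq_add_cos_sq θ
  apply euclid3_ext
  · simp [rotX3_apply0]
  · simp only [rotX3_apply0, rotX3_apply1, rotX3_apply2, Real.cos_neg, Real.sin_neg]
    linear_combination (x 1) * h
  · simp only [rotX3_apply0, rotX3_apply1, rotX3_apply2, Real.cos_neg, Real.sin_neg]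
    linear_combination (x 2) * h

lemma rotX3_zero (x : EuclideanSpace ℝ (Fin 3)) : rotX3 0 x = x := by
  apply euclid3_ext <;>
    simp [rotX3_apply0, rotX3_apply1, rotX3_apply2]

lemma rotX3_continuous : Continuous fun p : ℝ × EuclideanSpace ℝ (Fin 3) => rotX3 p.1 p.2 := by
  have hc : ∀ i : Fin 3, Continuous fun p : ℝ × EuclideanSpace ℝ (Fin 3) => p.2 i :=
    fun i => (EuclideanSpace.proj i).continuous.comp continuous_snd
  apply (PiLp.continuous_toLp 2 (fun _ : Fin 3 => ℝ)).comp
  rw [continuous_pi_iff]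
  intro i
  fin_cases i <;> simp [rotX3] <;> fun_prop

abbrev Sph := Metric.sphere (0 : EuclideanSpace ℝ (Fin 3)) 1

noncomputable def rS (θ : ℝ) (x : Sph) : Sph :=
  ⟨rotX3 θ (x : EuclideanSpace ℝ (Fin 3)), by
    rw [mem_sphere_zero_iff_norm, rotX3_norm]
    exact mem_sphere_zero_iff_norm.mp x.2⟩

noncomputable def hX (θ : ℝ) : (Sph × Real.Angle) ≃ₜ (Sph × Real.Angle) where
  toFun p := (rS θ p.1, p.2)
  invFun p := (rS (-θ) p.1, p.2)
  left_inv p := by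
    refine Prod.ext ?_ rfl
    exact Subtype.ext (rotX3_rotX3 θ p.1)
  right_inv p := by
    refine Prod.ext ?_ rfl
    apply Subtype.ext
    have := rotX3_rotX3 (-θ) (p.1 : EuclideanSpace ℝ (Fin 3))
    rwa [neg_neg] at this
  continuous_toFun := by
    refine Continuous.prodMk ?_ continuous_snd
    apply Continuous.subtype_mk
    exact rotX3_continuous.comp ((continuous_const).prodMk
      (continuous_subtype_val.comp continuous_fst))
  continuous_invFun := by
    refine Continuous.prodMk ?_ continuous_snd
    apply Continuous.subtype_mk
    exact rotX3_continuous.comp ((continuous_const).prodMk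
      (continuous_subtype_val.comp continuous_fst))

example : True := trivial

noncomputable def Fmap (q : ℝ × (Sph × Real.Angle)) : Sph × Real.Angle :=
  (rS q.1 q.2.1, q.2.2)

lemma Fmap_continuous : Continuous Fmap := by
  refine Continuous.prodMk ?_ (continuous_snd.comp continuous_snd)
  apply Continuous.subtype_mk
  exact rotX3_continuous.comp (continuous_fst.prodMk
    (continuous_subtype_val.comp (continuous_fst.comp continuous_snd)))

lemma Fmap_zero (p : Sph × Real.Angle) : Fmap (0, p) = p := by
  refine Prod.ext ?_ rfl
  exact Subtype.ext (rotX3_zero _)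

lemma Fmap_eq_hX (θ : ℝ) (p : Sph × Real.Angle) : Fmap (θ, p) = hX θ p := rfl

/-- The Gluck-twist map `σ` of `S² × S¹` is isotopic to its
inverse `σ⁻¹`: there is a continuous `H : [0,1] × (S² × S¹) → S² × S¹` with
`H(0,·) = σ`, `H(1,·) = σ⁻¹`, and `H(t,·)` a homeomorphism for every `t`. -/
theorem gluck_isotopic_to_inverse
    (σ σinv : (Metric.sphere (0 : EuclideanSpace ℝ (Fin 3)) 1 × Real.Angle) ≃ₜ
              (Metric.sphere (0 : EuclideanSpace ℝ (Fin 3)) 1 × Real.Angle))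
    (hσ : ∀ (x : Metric.sphere (0 : EuclideanSpace ℝ (Fin 3)) 1) (φ : Real.Angle),
      ((σ (x, φ)).1 : EuclideanSpace ℝ (Fin 3)) 0 =
          (x : EuclideanSpace ℝ (Fin 3)) 0 * φ.cos +
            (x : EuclideanSpace ℝ (Fin 3)) 1 * φ.sin ∧
      ((σ (x, φ)).1 : EuclideanSpace ℝ (Fin 3)) 1 =
          -((x : EuclideanSpace ℝ (Fin 3)) 0) * φ.sin +
            (x : EuclideanSpace ℝ (Fin 3)) 1 * φ.cos ∧
      ((σ (x, φ)).1 : EuclideanSpace ℝ (Fin 3)) 2 =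
          (x : EuclideanSpace ℝ (Fin 3)) 2 ∧
      (σ (x, φ)).2 = φ)
    (hσinv : ∀ (x : Metric.sphere (0 : EuclideanSpace ℝ (Fin 3)) 1) (φ : Real.Angle),
      ((σinv (x, φ)).1 : EuclideanSpace ℝ (Fin 3)) 0 =
          (x : EuclideanSpace ℝ (Fin 3)) 0 * φ.cos -
            (x : EuclideanSpace ℝ (Fin 3)) 1 * φ.sin ∧
      ((σinv (x, φ)).1 : EuclideanSpace ℝ (Fin 3)) 1 =
          (x : EuclideanSpace ℝ (Fin 3)) 0 * φ.sin +
            (x : EuclideanSpace ℝ (Fin 3)) 1 * φ.cos ∧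
      ((σinv (x, φ)).1 : EuclideanSpace ℝ (Fin 3)) 2 =
          (x : EuclideanSpace ℝ (Fin 3)) 2 ∧
      (σinv (x, φ)).2 = φ) :
    ∃ H : Set.Icc (0 : ℝ) 1 × (Metric.sphere (0 : EuclideanSpace ℝ (Fin 3)) 1 × Real.Angle) →
          Metric.sphere (0 : EuclideanSpace ℝ (Fin 3)) 1 × Real.Angle,
      Continuous H ∧
      (∀ p, H (⟨0, by norm_num⟩, p) = σ p) ∧
      (∀ p, H (⟨1, by norm_num⟩, p) = σinv p) ∧
      (∀ t : Set.Icc (0 : ℝ) 1,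
        ∃ e : (Metric.sphere (0 : EuclideanSpace ℝ (Fin 3)) 1 × Real.Angle) ≃ₜ
              (Metric.sphere (0 : EuclideanSpace ℝ (Fin 3)) 1 × Real.Angle),
          ∀ p, e p = H (t, p)) := by
  refine ⟨fun q => Fmap (Real.pi * q.1.1, σ (Fmap (-(Real.pi * q.1.1), q.2))), ?_, ?_, ?_, ?_⟩
  · have hθ : Continuous fun q : Set.Icc (0:ℝ) 1 × (Sph × Real.Angle) =>
        Real.pi * (q.1 : ℝ) :=
      continuous_const.mul (continuous_subtype_val.comp continuous_fst)
    exact Fmap_continuous.comp (hθ.prodMk (σ.continuous.comp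
      (Fmap_continuous.comp (hθ.neg.prodMk continuous_snd))))
  · intro p
    simp only [mul_zero, neg_zero, Fmap_zero]
  · intro p
    obtain ⟨x, φ⟩ := p
    simp only [mul_one]
    have hy : Fmap (-Real.pi, (x, φ)) = (rS (-Real.pi) x, φ) := rfl
    rw [hy]
    set y : Sph := rS (-Real.pi) x with hydef
    have hy0 : (y : EuclideanSpace ℝ (Fin 3)) 0 = (x : EuclideanSpace ℝ (Fin 3)) 0 := by
      simp [hydef, rS, rotX3_apply0]
    have hy1 : (y : EuclideanSpace ℝ (Fin 3)) 1 = -((x : EuclideanSpace ℝ (Fin 3)) 1) := by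
      simp [hydef, rS, rotX3_apply1]
    have hy2 : (y : EuclideanSpace ℝ (Fin 3)) 2 = -((x : EuclideanSpace ℝ (Fin 3)) 2) := by
      simp [hydef, rS, rotX3_apply2]
    obtain ⟨e0, e1, e2, e3⟩ := hσ y φ
    obtain ⟨f0, f1, f2, f3⟩ := hσinv x φ
    have : Fmap (Real.pi, σ (y, φ)) = (rS Real.pi (σ (y, φ)).1, (σ (y, φ)).2) := rfl
    rw [this]
    refine Prod.ext ?_ (by rw [e3, f3])
    apply Subtype.ext
    apply euclid3_ext
    · show rotX3 Real.pi ((σ (y, φ)).1 : EuclideanSpace ℝ (Fin 3)) 0 = _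
      rw [rotX3_apply0, e0, hy0, hy1, f0]; ring
    · show rotX3 Real.pi ((σ (y, φ)).1 : EuclideanSpace ℝ (Fin 3)) 1 = _
      rw [rotX3_apply1, e1, e2, hy0, hy1, hy2, f1]
      simp [Real.cos_pi, Real.sin_pi]; ring
    · show rotX3 Real.pi ((σ (y, φ)).1 : EuclideanSpace ℝ (Fin 3)) 2 = _
      rw [rotX3_apply2, e1, e2, hy0, hy1, hy2, f2]
      simp [Real.cos_pi, Real.sin_pi]
  · intro t
    refine ⟨((hX (-(Real.pi * (t : ℝ)))).trans σ).trans (hX (Real.pi * (t : ℝ))), fun p => rfl⟩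
end
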